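/- F_∞(M(2)) = 3: the maximum size of a family of pairwise M(2)-different partial permutations of the single edge {1,2} with arbitrarily many blank spaces is 3. -/

import Mathlib

def validPerm2 {c : ℕ} (f : Fin c → Option (Fin 2)) : Prop :=
  ∀ v : Fin 2, ∃! i, f i = some v

def conflict {c : ℕ} (f g : Fin c → Option (Fin 2)) : Prop :=
  ∃ i, (f i = some 0 ∧ g i = some 1) ∨ (f i = some 1 ∧ g i = some 0)

lemma key {c : ℕ} {f g h : Fin c → Option (Fin 2)} {v w : Fin 2}
    (hf : validPerm2 f) (hg : validPerm2 g) (hh : validPerm2 h)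
    (hgh : conflict g h)
    (h1 : ∃ i, f i = some v ∧ g i = some w)
    (h2 : ∃ i, f i = some v ∧ h i = some w) : False := by
  obtain ⟨i, hfi, hgi⟩ := h1
  obtain ⟨j, hfj, hhj⟩ := h2
  have hij : j = i := (hf v).unique hfj hfi
  subst hij
  obtain ⟨k, hk | hk⟩ := hgh
  · fin_cases w
    · have : k = j := (hg 0).unique hk.1 hgi
      subst this
      rw [hk.2] at hhj; exact absurd hhj (by decide)
    · have : k = j := (hh 1).unique hk.2 hhj
      subst this
      rw [hk.1] at hgi; exact absurd hgi (by decide)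
  · fin_cases w
    · have : k = j := (hh 0).unique hk.2 hhj
      subst this
      rw [hk.1] at hgi; exact absurd hgi (by decide)
    · have : k = j := (hg 1).unique hk.1 hgi
      subst this
      rw [hk.2] at hhj; exact absurd hhj (by decide)

/-- `F_∞(M(2)) = 3`: any family of pairwise `M(2)`-different partial
permutations of the single edge `{1,2}` with arbitrarily many blanks has size
at most `3`, and some such family has size exactly `3`. -/
theorem stmt15 :
    (∀ (c : ℕ) (S : Finset (Fin c → Option (Fin 2))), (∀ f ∈ S, validPerm2 f) →
      (S : Set (Fin c → Option (Fin 2))).Pairwise conflict → S.card ≤ 3) ∧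
    (∃ (c : ℕ) (S : Finset (Fin c → Option (Fin 2))), (∀ f ∈ S, validPerm2 f) ∧
      (S : Set (Fin c → Option (Fin 2))).Pairwise conflict ∧ S.card = 3) := by
  constructor
  · intro c S hval hpair
    classical
    rcases S.eq_empty_or_nonempty with rfl | ⟨f, hf⟩
    · simp
    have hcard : (S.erase f).card ≤ 2 := by
      have := Finset.card_le_card_of_injOn
        (f := fun g => decide (∃ i, f i = some 0 ∧ g i = some 1))
        (s := S.erase f) (t := (Finset.univ : Finset Bool))
        (fun _ _ => Finset.mem_univ _) ?_
      · simpa using this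
      intro g hg h hh hφ
      by_contra hne
      have hgS := Finset.mem_of_mem_erase hg
      have hhS := Finset.mem_of_mem_erase hh
      have hgh : conflict g h := hpair hgS hhS hne
      by_cases hcase : ∃ i, f i = some 0 ∧ g i = some 1
      · have hcase' : ∃ i, f i = some 0 ∧ h i = some 1 := by
          by_contra hc
          simp only [hcase, hc, decide_true, decide_false] at hφ
          exact Bool.noConfusion hφ
        exact key (hval f hf) (hval g hgS) (hval h hhS) hgh hcase hcase'
      · have hcase' : ¬ ∃ i, f i = some 0 ∧ h i = some 1 := by
          by_contra hc
          simp only [hcase, hc, decide_true, decide_false] at hφ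
          exact Bool.noConfusion hφ
        have hg1 : ∃ i, f i = some 1 ∧ g i = some 0 := by
          have hcg : conflict f g := hpair hf hgS (Finset.ne_of_mem_erase hg).symm
          obtain ⟨i, hi | hi⟩ := hcg
          · exact absurd ⟨i, hi⟩ hcase
          · exact ⟨i, hi⟩
        have hh1 : ∃ i, f i = some 1 ∧ h i = some 0 := by
          have hch : conflict f h := hpair hf hhS (Finset.ne_of_mem_erase hh).symm
          obtain ⟨i, hi | hi⟩ := hch
          · exact absurd ⟨i, hi⟩ hcase'
          · exact ⟨i, hi⟩
        exact key (hval f hf) (hval g hgS) (hval h hhS) hgh hg1 hh1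
    have := Finset.card_erase_of_mem hf
    omega
  · refine ⟨3, {![some 0, some 1, none], ![none, some 0, some 1], ![some 1, none, some 0]}, ?_, ?_, ?_⟩
    · intro f hf
      fin_cases hf <;> intro v <;> fin_cases v <;> (unfold ExistsUnique; decide)
    · intro f hf g hg hne
      simp only [Finset.coe_insert, Set.mem_insert_iff, Finset.coe_singleton,
        Set.mem_singleton_iff] at hf hg
      rcases hf with rfl | rfl | rfl <;> rcases hg with rfl | rfl | rfl <;>
        first
        | exact absurd rfl hne
        | (unfold conflict; decide)
    · decide
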